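/- Let S and R be strings (lists over an alphabet Σ), let t ∈ {1,…,|S|} and k ≥ 0. If there exists i ≤ t such that the edit (Levenshtein) distance between the substring S[i..t] and R is at most k, then the edit distance between the length-|R| suffix ending at position t, namely S[t−|R|+1..t], and R is at most 2k. (If t < |R| use the prefix S[1..t].) -/

import Mathlib

variable {α : Type*}

/-- Port note: `levenshtein` was removed from Mathlib; its former definition
(Mathlib.Data.List.EditDistance.Defs) is reproduced here. -/
structure Levenshtein.Cost (α β δ : Type*) where
  /-- Cost to delete an element from a list. -/
  delete : α → δ
  /-- Cost to insert an element into a list. -/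
  insert : β → δ
  /-- Cost to substitute one element for another in a list. -/
  substitute : α → β → δ

/-- The default cost structure, for which all operations cost `1`. -/
def Levenshtein.defaultCost [DecidableEq α] : Levenshtein.Cost α α ℕ where
  delete _ := 1
  insert _ := 1
  substitute a b := if a = b then 0 else 1

/-- (Implementation detail) one step of the Levenshtein dynamic program. -/
def Levenshtein.impl {β δ : Type*} [AddZeroClass δ] [Min δ]
    (C : Levenshtein.Cost α β δ) (xs : List α) (y : β)
    (d : {r : List δ // 0 < r.length}) : {r : List δ // 0 < r.length} :=
  let ⟨ds, w⟩ := d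
  xs.zip (ds.zip ds.tail) |>.foldr
    (init := ⟨[C.insert y + ds.getLast (List.length_pos_iff.mp w)], by simp⟩)
    (fun ⟨x, d₀, d₁⟩ ⟨r, w⟩ =>
      ⟨min (C.delete x + r[0]) (min (C.insert y + d₀) (C.substitute x y + d₁)) :: r, by simp⟩)

/-- `suffixLevenshtein C xs ys` computes the Levenshtein distance from each suffix
of `xs` to `ys`. -/
def suffixLevenshtein {β δ : Type*} [AddZeroClass δ] [Min δ]
    (C : Levenshtein.Cost α β δ) (xs : List α) (ys : List β) :
    {r : List δ // 0 < r.length} :=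
  ys.foldr
    (Levenshtein.impl C xs)
    (xs.foldr (init := ⟨[0], by simp⟩) (fun a ⟨r, w⟩ => ⟨(C.delete a + r[0]) :: r, by simp⟩))

/-- `levenshtein C xs ys` computes the Levenshtein distance from `xs` to `ys`. -/
def levenshtein {β δ : Type*} [AddZeroClass δ] [Min δ]
    (C : Levenshtein.Cost α β δ) (xs : List α) (ys : List β) : δ :=
  let ⟨r, w⟩ := suffixLevenshtein C xs ys
  r[0]

/-- Levenshtein edit distance with unit costs. -/
def edit [DecidableEq α] (u v : List α) : ℕ :=
  levenshtein Levenshtein.defaultCost u v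

section LevenshteinPort

variable {β δ : Type*} [AddZeroClass δ] [Min δ]

theorem Levenshtein.impl_cons_fst_zero' (C : Levenshtein.Cost α β δ) (x : α) (xs : List α) (y : β)
    (d : δ) (ds : List δ) (w : 0 < (d :: ds).length) (w' : 0 < List.length ds) :
    (Levenshtein.impl C (x :: xs) y ⟨d :: ds, w⟩).1[0]'(Levenshtein.impl C (x :: xs) y ⟨d :: ds, w⟩).2 =
      let ⟨r, _⟩ := Levenshtein.impl C xs y ⟨ds, w'⟩
      min (C.delete x + r[0]) (min (C.insert y + d) (C.substitute x y + ds[0])) :=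
  match ds, w' with | _ :: _, _ => rfl

theorem Levenshtein.impl_cons' (C : Levenshtein.Cost α β δ) (x : α) (xs : List α) (y : β)
    (d : δ) (ds : List δ) (w : 0 < (d :: ds).length) (w' : 0 < List.length ds) :
    Levenshtein.impl C (x :: xs) y ⟨d :: ds, w⟩ =
      let ⟨r, _⟩ := Levenshtein.impl C xs y ⟨ds, w'⟩
      ⟨min (C.delete x + r[0]) (min (C.insert y + d) (C.substitute x y + ds[0])) :: r, by simp⟩ :=
  match ds, w' with | _ :: _, _ => rfl

theorem Levenshtein.impl_length' (C : Levenshtein.Cost α β δ) (xs : List α) (y : β)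
    (d : {r : List δ // 0 < r.length}) (w : d.1.length = xs.length + 1) :
    (Levenshtein.impl C xs y d).1.length = xs.length + 1 := by
  induction xs generalizing d with
  | nil => rfl
  | cons x xs ih =>
    dsimp [Levenshtein.impl]
    match d, w with
    | ⟨d₁ :: d₂ :: ds, _⟩, w =>
      dsimp
      congr 1
      exact ih ⟨d₂ :: ds, (by simp)⟩ (by simpa using w)

theorem suffixLevenshtein_length' (C : Levenshtein.Cost α β δ) (xs : List α) (ys : List β) :
    (suffixLevenshtein C xs ys).1.length = xs.length + 1 := by
  induction ys with
  | nil =>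
    dsimp [suffixLevenshtein]
    induction xs with
    | nil => rfl
    | cons _ xs ih =>
      simp_all
  | cons y ys ih =>
    dsimp [suffixLevenshtein]
    rw [Levenshtein.impl_length']
    exact ih

theorem suffixLevenshtein_cons₂' (C : Levenshtein.Cost α β δ) (xs : List α) (y : β) (ys : List β) :
    suffixLevenshtein C xs (y :: ys) = (Levenshtein.impl C xs) y (suffixLevenshtein C xs ys) :=
  rfl

theorem suffixLevenshtein_cons₁_aux' {γ : Type*} {x y : {r : List γ // 0 < r.length}}
    (w₀ : x.1[0]'x.2 = y.1[0]'y.2) (w : x.1.tail = y.1.tail) : x = y := by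
  match x, y with
  | ⟨hx :: tx, _⟩, ⟨hy :: ty, _⟩ => simp_all

theorem suffixLevenshtein_cons₁' (C : Levenshtein.Cost α β δ) (x : α) (xs : List α) (ys : List β) :
    suffixLevenshtein C (x :: xs) ys =
      ⟨levenshtein C (x :: xs) ys ::
        (suffixLevenshtein C xs ys).1, by simp⟩ := by
  induction ys with
  | nil =>
    dsimp [levenshtein, suffixLevenshtein]
    rfl
  | cons y ys ih =>
    apply suffixLevenshtein_cons₁_aux'
    · rfl
    · rw [suffixLevenshtein_cons₂' C (x :: xs), ih, Levenshtein.impl_cons']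
      · rfl
      · simp [suffixLevenshtein_length']

theorem suffixLevenshtein_cons_cons_fst_get_zero' (C : Levenshtein.Cost α β δ)
    (x : α) (xs : List α) (y : β) (ys : List β) (w) :
    (suffixLevenshtein C (x :: xs) (y :: ys)).1[0]'w =
      let ⟨dx, _⟩ := suffixLevenshtein C xs (y :: ys)
      let ⟨dy, _⟩ := suffixLevenshtein C (x :: xs) ys
      let ⟨dxy, _⟩ := suffixLevenshtein C xs ys
      min
        (C.delete x + dx[0])
        (min
          (C.insert y + dy[0])
          (C.substitute x y + dxy[0])) := by
  conv =>
    lhs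
    dsimp only [suffixLevenshtein_cons₂']
  simp only [suffixLevenshtein_cons₁']
  rw [Levenshtein.impl_cons_fst_zero']
  rfl

@[simp]
theorem levenshtein_nil_nil (C : Levenshtein.Cost α β δ) : levenshtein C [] [] = 0 := by
  simp [levenshtein, suffixLevenshtein]

@[simp]
theorem levenshtein_nil_cons (C : Levenshtein.Cost α β δ) (y : β) (ys : List β) :
    levenshtein C [] (y :: ys) = C.insert y + levenshtein C [] ys := by
  have key : ∀ (l : List δ) (h : l ≠ []) (h' : 0 < l.length), l.length = 1 →
      l.getLast h = l[0] := by
    intro l h h' hl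
    match l, hl with
    | [a], _ => rfl
  have hl := suffixLevenshtein_length' C [] ys
  simp only [List.length_nil, zero_add] at hl
  dsimp +unfoldPartialApp [levenshtein, suffixLevenshtein, Levenshtein.impl] at hl ⊢
  show C.insert y + _ = C.insert y + _
  congr 1
  exact key _ _ _ hl

@[simp]
theorem levenshtein_cons_nil (C : Levenshtein.Cost α β δ) (x : α) (xs : List α) :
    levenshtein C (x :: xs) [] = C.delete x + levenshtein C xs [] :=
  rfl

@[simp]
theorem levenshtein_cons_cons (C : Levenshtein.Cost α β δ)
    (x : α) (xs : List α) (y : β) (ys : List β) :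
    levenshtein C (x :: xs) (y :: ys) =
      min (C.delete x + levenshtein C xs (y :: ys))
        (min (C.insert y + levenshtein C (x :: xs) ys)
          (C.substitute x y + levenshtein C xs ys)) :=
  suffixLevenshtein_cons_cons_fst_get_zero' ..

end LevenshteinPort

lemma edit_nil_right [DecidableEq α] (xs : List α) : edit xs [] = xs.length := by
  induction xs with
  | nil => simp [edit]
  | cons x xs ih =>
    simp only [edit, levenshtein_cons_nil] at *
    simp only [ih]
    show 1 + _ = _
    simp [Nat.add_comm]

lemma edit_insert_le [DecidableEq α] (xs : List α) (y : α) (ys : List α) :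
    edit xs (y :: ys) ≤ 1 + edit xs ys := by
  cases xs with
  | nil =>
    simp only [edit, levenshtein_nil_cons]
    exact le_refl _
  | cons x xs =>
    simp only [edit, levenshtein_cons_cons]
    exact le_trans (min_le_right _ _) (min_le_left _ _)

lemma edit_le_cons [DecidableEq α] (x : α) (xs ys : List α) :
    edit xs ys ≤ edit (x :: xs) ys + 1 := by
  induction ys with
  | nil => simp only [edit_nil_right, List.length_cons]; omega
  | cons y ys ih =>
    have h3 := edit_insert_le xs y ys
    conv_rhs => rw [edit, levenshtein_cons_cons]
    have hd : Levenshtein.defaultCost.delete x = 1 := rfl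
    have hi : Levenshtein.defaultCost.insert y = 1 := rfl
    have hs : Levenshtein.defaultCost.substitute x y = if x = y then 0 else 1 := rfl
    rw [hd, hi, hs]
    simp only [edit] at *
    split_ifs <;> omega

lemma cons_edit_le [DecidableEq α] (x : α) (xs ys : List α) :
    edit (x :: xs) ys ≤ edit xs ys + 1 := by
  cases ys with
  | nil => simp [edit_nil_right]
  | cons y ys =>
    rw [edit, levenshtein_cons_cons]
    refine le_trans (min_le_left _ _) ?_
    have hd : Levenshtein.defaultCost.delete x = 1 := rfl
    rw [hd]
    simp only [edit]
    omega

lemma edit_drop_le [DecidableEq α] (a w R : List α) :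
    edit w R ≤ edit (a ++ w) R + a.length := by
  induction a with
  | nil => simp
  | cons x a ih =>
    have := edit_le_cons x (a ++ w) R
    simp only [List.cons_append, List.length_cons]
    omega

lemma edit_append_le [DecidableEq α] (a w R : List α) :
    edit (a ++ w) R ≤ edit w R + a.length := by
  induction a with
  | nil => simp
  | cons x a ih =>
    have := cons_edit_le x (a ++ w) R
    simp only [List.cons_append, List.length_cons]
    omega

lemma length_le_edit₁ [DecidableEq α] : ∀ (xs ys : List α),
    xs.length ≤ edit xs ys + ys.length
  | [], ys => by simp
  | x::xs, [] => by simp [edit_nil_right]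
  | x::xs, y::ys => by
    have h1 := length_le_edit₁ xs (y::ys)
    have h2 := length_le_edit₁ (x::xs) ys
    have h3 := length_le_edit₁ xs ys
    rw [edit, levenshtein_cons_cons]
    have hd : Levenshtein.defaultCost.delete x = 1 := rfl
    have hi : Levenshtein.defaultCost.insert y = 1 := rfl
    have hs : Levenshtein.defaultCost.substitute x y = if x = y then 0 else 1 := rfl
    rw [hd, hi, hs]
    simp only [edit, List.length_cons] at *
    rcases min_cases (1 + levenshtein Levenshtein.defaultCost xs (y :: ys))
      (min (1 + levenshtein Levenshtein.defaultCost (x :: xs) ys)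
        ((if x = y then 0 else 1) + levenshtein Levenshtein.defaultCost xs ys)) with ⟨h,_⟩|⟨h,_⟩ <;>
      rw [h] <;>
      [omega;
       (rcases min_cases (1 + levenshtein Levenshtein.defaultCost (x :: xs) ys)
          ((if x = y then 0 else 1) + levenshtein Levenshtein.defaultCost xs ys) with ⟨h',_⟩|⟨h',_⟩ <;>
        rw [h'] <;> first | (split_ifs <;> omega) | omega)]

lemma edit_nil_left [DecidableEq α] (ys : List α) : edit [] ys = ys.length := by
  induction ys with
  | nil => simp [edit]
  | cons y ys ih =>
    simp only [edit, levenshtein_nil_cons] at *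
    simp only [ih]
    show 1 + _ = _
    simp [Nat.add_comm]

lemma length_le_edit₂ [DecidableEq α] : ∀ (xs ys : List α),
    ys.length ≤ edit xs ys + xs.length
  | [], ys => by simp [edit_nil_left]
  | x::xs, [] => by simp
  | x::xs, y::ys => by
    have h1 := length_le_edit₂ xs (y::ys)
    have h2 := length_le_edit₂ (x::xs) ys
    have h3 := length_le_edit₂ xs ys
    rw [edit, levenshtein_cons_cons]
    have hd : Levenshtein.defaultCost.delete x = 1 := rfl
    have hi : Levenshtein.defaultCost.insert y = 1 := rfl
    have hs : Levenshtein.defaultCost.substitute x y = if x = y then 0 else 1 := rfl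
    rw [hd, hi, hs]
    simp only [edit, List.length_cons] at *
    rcases min_cases (1 + levenshtein Levenshtein.defaultCost xs (y :: ys))
      (min (1 + levenshtein Levenshtein.defaultCost (x :: xs) ys)
        ((if x = y then 0 else 1) + levenshtein Levenshtein.defaultCost xs ys)) with ⟨h,_⟩|⟨h,_⟩ <;>
      rw [h] <;>
      [omega;
       (rcases min_cases (1 + levenshtein Levenshtein.defaultCost (x :: xs) ys)
          ((if x = y then 0 else 1) + levenshtein Levenshtein.defaultCost xs ys) with ⟨h',_⟩|⟨h',_⟩ <;>
        rw [h'] <;> first | (split_ifs <;> omega) | omega)]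

/-- If some substring of S ending at position t is within edit distance k of R,
then the length-|R| substring of S ending at t (prefix S[1..t] when t < |R|)
is within edit distance 2k of R. -/
theorem stmt_0 [DecidableEq α] (S R : List α) (t k : ℕ)
    (ht1 : 1 ≤ t) (ht2 : t ≤ S.length)
    (h : ∃ i, 1 ≤ i ∧ i ≤ t ∧ edit ((S.take t).drop (i - 1)) R ≤ k) :
    edit ((S.take t).drop (t - R.length)) R ≤ 2 * k := by
  obtain ⟨i, hi1, hit, hk⟩ := h
  set P := S.take t with hPdef
  have hP : P.length = t := by
    simp only [hPdef, List.length_take]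
    omega
  set m := i - 1 with hmdef
  set n := t - R.length with hndef
  have hm : m ≤ t := by omega
  have hn : n ≤ t := by omega
  have hlu : (P.drop m).length = t - m := by simp [hP]
  have hlw : (P.drop n).length = t - n := by simp [hP]
  have hR1 := length_le_edit₁ (P.drop m) R
  have hR2 := length_le_edit₂ (P.drop m) R
  rw [hlu] at hR1 hR2
  rcases le_total m n with hmn | hnm
  · have hdd : P.drop n = (P.drop m).drop (n - m) := by
      rw [List.drop_drop]
      congr 1
      omega
    have heq : (P.drop m).take (n - m) ++ P.drop n = P.drop m := by
      rw [hdd, List.take_append_drop]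
    have h1 := edit_drop_le ((P.drop m).take (n - m)) (P.drop n) R
    rw [heq] at h1
    have hlen : ((P.drop m).take (n - m)).length = min (n - m) (t - m) := by
      rw [List.length_take, hlu]
    omega
  · have hdd : P.drop m = (P.drop n).drop (m - n) := by
      rw [List.drop_drop]
      congr 1
      omega
    have heq : (P.drop n).take (m - n) ++ P.drop m = P.drop n := by
      rw [hdd]
      exact List.take_append_drop _ _
    have h1 := edit_append_le ((P.drop n).take (m - n)) (P.drop m) R
    rw [heq] at h1
    have hlen : ((P.drop n).take (m - n)).length = min (m - n) (t - n) := by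
      rw [List.length_take, hlw]
    omega
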